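/- For every x ∈ ℝⁿ and every i ∈ {1,…,m}, let x⁺(i) = x − ((a_iᵀx − b_i)/‖a_i‖²) a_i be the result of one Kaczmarz projection onto the hyperplane a_iᵀz = b_i. Then the expected squared distance to the solution set after one step of the randomized Kaczmarz method, in which row i is chosen with probability ‖a_i‖²/‖A‖_F², satisfies Σ_{i=1}^m (‖a_i‖²/‖A‖_F²) ‖x⁺(i) − (x⁺(i))*‖² ≤ (1 − λ_min/‖A‖_F²) ‖x − x*‖². -/

import Mathlib

open MeasureTheory ProbabilityTheory Matrix Finset
open scoped Classical

lemma aux_sum_sq_pos {k : ℕ} (v : Fin k → ℝ) (hv : v ≠ 0) : 0 < ∑ t, (v t) ^ 2 := by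
  obtain ⟨t, ht⟩ := Function.ne_iff.1 hv
  exact Finset.sum_pos' (fun s _ => sq_nonneg _)
    ⟨t, Finset.mem_univ t, lt_of_le_of_ne (sq_nonneg _) (Ne.symm (pow_ne_zero 2 ht))⟩

lemma aux_sum_sq_zero {k : ℕ} (v : Fin k → ℝ) (hv : ∑ t, (v t) ^ 2 = 0) : v = 0 := by
  by_contra h
  exact absurd hv (ne_of_gt (aux_sum_sq_pos v h))

lemma aux_spectral {m n : ℕ} (A : Matrix (Fin m) (Fin n) ℝ) (lammin : ℝ)
    (hlb : ∀ c : ℝ, c ≠ 0 → (∃ v : Fin n → ℝ, v ≠ 0 ∧ (Aᵀ * A).mulVec v = c • v) → lammin ≤ c)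
    (v : Fin n → ℝ) (hv : ∀ w : Fin n → ℝ, A.mulVec w = 0 → ∑ s, v s * w s = 0) :
    lammin * ∑ s, (v s) ^ 2 ≤ ∑ i, (A.mulVec v i) ^ 2 := by
  have hB : (Aᵀ * A).IsHermitian := by simpa using Matrix.isHermitian_conjTranspose_mul_self A
  set e := hB.eigenvectorBasis with he
  set μ := hB.eigenvalues with hμ
  let V : EuclideanSpace ℝ (Fin n) := WithLp.toLp 2 v
  have hinner : ∀ (a c : EuclideanSpace ℝ (Fin n)), (inner ℝ a c : ℝ) = ∑ s, a s * c s := by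
    intro a c
    simp [PiLp.inner_apply, RCLike.inner_apply, mul_comm]
  have key1 : ∀ w : Fin n → ℝ, (Aᵀ * A).mulVec w = 0 → A.mulVec w = 0 := by
    intro w hw
    have h1 : ∑ i, (A.mulVec w i) ^ 2 = w ⬝ᵥ ((Aᵀ * A).mulVec w) := by
      rw [← Matrix.mulVec_mulVec, Matrix.dotProduct_mulVec, Matrix.vecMul_transpose]
      simp [dotProduct, sq]
    rw [hw] at h1
    simp [dotProduct] at h1
    exact aux_sum_sq_zero _ h1
  set c : Fin n → ℝ := fun i => ∑ s, v s * e i s with hc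
  have hcV : ∀ i, (inner ℝ V (e i) : ℝ) = c i := fun i => hinner V (e i)
  have hcV' : ∀ i, (inner ℝ (e i) V : ℝ) = c i := by
    intro i
    rw [real_inner_comm]
    exact hcV i
  have hnorm : ∑ s, (v s) ^ 2 = ∑ i, c i * c i := by
    calc ∑ s, (v s) ^ 2 = (inner ℝ V V : ℝ) := by rw [hinner]; simp [sq, V]
    _ = ∑ i, (inner ℝ V (e i) : ℝ) * (inner ℝ (e i) V : ℝ) := (e.sum_inner_mul_inner V V).symm
    _ = ∑ i, c i * c i := by
        refine Finset.sum_congr rfl fun i _ => ?_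
        rw [hcV i, hcV' i]
  have hBt : (Aᵀ * A)ᵀ = Aᵀ * A := by
    rw [Matrix.transpose_mul, Matrix.transpose_transpose]
  let BV : EuclideanSpace ℝ (Fin n) := WithLp.toLp 2 ((Aᵀ * A).mulVec v)
  have hQ : ∑ i, (A.mulVec v i) ^ 2 = ∑ i, μ i * (c i * c i) := by
    have h1 : ∑ i, (A.mulVec v i) ^ 2 = (inner ℝ V BV : ℝ) := by
      rw [hinner]
      have h0 : (∑ s, V s * BV s) = v ⬝ᵥ ((Aᵀ * A) *ᵥ v) := rfl
      rw [h0, ← Matrix.mulVec_mulVec, Matrix.dotProduct_mulVec, Matrix.vecMul_transpose]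
      simp [dotProduct, sq]
    have h2 : ∀ i, (inner ℝ (e i) BV : ℝ) = μ i * c i := by
      intro i
      have heig : (Aᵀ * A) *ᵥ ⇑(e i) = μ i • ⇑(e i) := hB.mulVec_eigenvectorBasis i
      have step1 : (inner ℝ (e i) BV : ℝ) = (⇑(e i) ᵥ* (Aᵀ * A)) ⬝ᵥ v := by
        rw [hinner]
        have h0 : (∑ s, e i s * BV s) = ⇑(e i) ⬝ᵥ ((Aᵀ * A) *ᵥ v) := rfl
        rw [h0, Matrix.dotProduct_mulVec]
      have step2 : (⇑(e i) ᵥ* (Aᵀ * A)) = (Aᵀ * A) *ᵥ ⇑(e i) := by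
        conv_lhs => rw [← hBt]
        rw [Matrix.vecMul_transpose]
      rw [step1, step2, heig, smul_dotProduct]
      congr 1
      calc ⇑(e i) ⬝ᵥ v = ∑ s, v s * e i s := by simp [dotProduct, mul_comm]
      _ = c i := rfl
    calc ∑ i, (A.mulVec v i) ^ 2 = (inner ℝ V BV : ℝ) := h1
    _ = ∑ i, (inner ℝ V (e i) : ℝ) * (inner ℝ (e i) BV : ℝ) := (e.sum_inner_mul_inner V BV).symm
    _ = ∑ i, μ i * (c i * c i) := by
        refine Finset.sum_congr rfl fun i _ => ?_
        rw [h2 i, hcV i]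
        ring
  have hterm : ∀ i, lammin * (c i * c i) ≤ μ i * (c i * c i) := by
    intro i
    by_cases hmi : μ i = 0
    · have heig : (Aᵀ * A) *ᵥ ⇑(e i) = μ i • ⇑(e i) := hB.mulVec_eigenvectorBasis i
      rw [hmi, zero_smul] at heig
      have hAe : A.mulVec ⇑(e i) = 0 := key1 _ heig
      have hci : c i = 0 := hv _ hAe
      rw [hci]
      simp
    · have hle : lammin ≤ μ i := by
        refine hlb (μ i) hmi ⟨⇑(e i), ?_, hB.mulVec_eigenvectorBasis i⟩
        intro h0
        have h1 : ‖e i‖ = 1 := e.orthonormal.1 i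
        have h2 : (e i : EuclideanSpace ℝ (Fin n)) = 0 := by simpa using congrArg (WithLp.toLp 2) h0
        rw [h2] at h1
        simp at h1
      nlinarith [mul_self_nonneg (c i)]
  calc lammin * ∑ s, (v s) ^ 2 = ∑ i, lammin * (c i * c i) := by
        rw [hnorm, Finset.mul_sum]
  _ ≤ ∑ i, μ i * (c i * c i) := Finset.sum_le_sum fun i _ => hterm i
  _ = ∑ i, (A.mulVec v i) ^ 2 := hQ.symm

theorem stmt0
    {m n : ℕ} (hm : 0 < m) (hn : 0 < n)
    (A : Matrix (Fin m) (Fin n) ℝ) (hA : A ≠ 0)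
    (hrowsne : ∀ i, (fun t => A i t) ≠ 0)
    (b : Fin m → ℝ)
    (hconsistent : ∃ z : Fin n → ℝ, A.mulVec z = b)
    (proj : (Fin n → ℝ) → (Fin n → ℝ))
    (hproj : ∀ y : Fin n → ℝ, A.mulVec (proj y) = b ∧
      ∀ z : Fin n → ℝ, A.mulVec z = b →
        ∑ s, (y s - proj y s) ^ 2 ≤ ∑ s, (y s - z s) ^ 2)
    (lammin : ℝ)
    (hlammin : IsLeast
      {c : ℝ | c ≠ 0 ∧ ∃ v : Fin n → ℝ, v ≠ 0 ∧ (Aᵀ * A).mulVec v = c • v} lammin)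
    (x : Fin n → ℝ)
    (xp : Fin m → Fin n → ℝ)
    (hxp : ∀ i s, xp i s = x s -
      ((∑ t, A i t * x t) - b i) / (∑ t, (A i t) ^ 2) * A i s) :
    ∑ i, ((∑ t, (A i t) ^ 2) / (∑ i', ∑ t, (A i' t) ^ 2)) *
        (∑ s, (xp i s - proj (xp i) s) ^ 2)
      ≤ (1 - lammin / (∑ i', ∑ t, (A i' t) ^ 2)) *
        (∑ s, (x s - proj x s) ^ 2) := by
  haveI : Nonempty (Fin m) := Fin.pos_iff_nonempty.mp hm
  set N : Fin m → ℝ := fun i => ∑ t, (A i t) ^ 2 with hNdef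
  set F : ℝ := ∑ i', ∑ t, (A i' t) ^ 2 with hFdef
  set r : Fin m → ℝ := fun i => (∑ t, A i t * x t) - b i with hrdef
  set D : ℝ := ∑ s, (x s - proj x s) ^ 2 with hDdef
  have hN : ∀ i, 0 < N i := fun i => aux_sum_sq_pos _ (hrowsne i)
  have hF : 0 < F := Finset.sum_pos (fun i _ => hN i) Finset.univ_nonempty
  have hxstar : A.mulVec (proj x) = b := (hproj x).1
  -- per-row Pythagoras
  have keyA : ∀ i (z : Fin n → ℝ), A.mulVec z = b →
      ∑ s, (xp i s - z s) ^ 2 = (∑ s, (x s - z s) ^ 2) - (r i) ^ 2 / N i := by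
    intro i z hz
    have hAz : ∑ t, A i t * z t = b i := by
      have := congrFun hz i
      simpa [Matrix.mulVec, dotProduct] using this
    have expand : ∀ s, (xp i s - z s) ^ 2 =
        (x s - z s) ^ 2 - (2 * (r i / N i)) * (A i s * (x s - z s))
          + (r i / N i) ^ 2 * (A i s) ^ 2 := by
      intro s
      rw [hxp i s]
      ring
    rw [Finset.sum_congr rfl fun s _ => expand s, Finset.sum_add_distrib,
      Finset.sum_sub_distrib, ← Finset.mul_sum, ← Finset.mul_sum]
    have hdot : ∑ s, A i s * (x s - z s) = r i := by
      have h1 : ∀ s, A i s * (x s - z s) = A i s * x s - A i s * z s := fun s => by ring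
      rw [Finset.sum_congr rfl fun s _ => h1 s, Finset.sum_sub_distrib, hAz]
    rw [hdot]
    have hNne : N i ≠ 0 := ne_of_gt (hN i)
    field_simp
    ring
  -- orthogonality of x - proj x to kernel
  have hperp : ∀ w : Fin n → ℝ, A.mulVec w = 0 → ∑ s, (x s - proj x s) * w s = 0 := by
    intro w hw
    set C : ℝ := ∑ s, (x s - proj x s) * w s with hCdef
    set W : ℝ := ∑ s, (w s) ^ 2 with hWdef
    have hall : ∀ t : ℝ, 0 ≤ t ^ 2 * W - 2 * t * C := by
      intro t
      have hsol : A.mulVec (proj x + t • w) = b := by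
        rw [Matrix.mulVec_add, Matrix.mulVec_smul, hw, hxstar]
        simp
      have hle := (hproj x).2 (proj x + t • w) hsol
      have hexp : ∀ s, (x s - (proj x + t • w) s) ^ 2 =
          (x s - proj x s) ^ 2 - 2 * t * ((x s - proj x s) * w s) + t ^ 2 * (w s) ^ 2 := by
        intro s
        simp only [Pi.add_apply, Pi.smul_apply, smul_eq_mul]
        ring
      rw [Finset.sum_congr rfl fun s _ => hexp s, Finset.sum_add_distrib,
        Finset.sum_sub_distrib, ← Finset.mul_sum, ← Finset.mul_sum] at hle
      rw [hCdef, hWdef]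
      linarith
    by_cases hW : W = 0
    · have hw0 : w = 0 := aux_sum_sq_zero _ hW
      rw [hCdef, hw0]
      simp
    · have hWpos : 0 < W :=
        lt_of_le_of_ne (Finset.sum_nonneg fun s _ => sq_nonneg _) (Ne.symm hW)
      have := hall (C / W)
      have hC2 : C ^ 2 ≤ 0 := by
        have h1 : (C / W) ^ 2 * W - 2 * (C / W) * C = -(C ^ 2) / W := by
          field_simp
          ring
        rw [h1] at this
        have h2 : (0:ℝ) ≤ -(C ^ 2) := by
          have h3 : (-(C ^ 2) / W) * W = -(C ^ 2) := div_mul_cancel₀ _ hW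
          nlinarith [mul_nonneg this hWpos.le]
        linarith
      have : C ^ 2 = 0 := le_antisymm hC2 (sq_nonneg C)
      exact pow_eq_zero_iff (by norm_num) |>.mp this
  -- residual identity
  have hres : ∀ i, A.mulVec (fun s => x s - proj x s) i = r i := by
    intro i
    simp only [Matrix.mulVec, dotProduct]
    have h1 : ∀ t, A i t * (x t - proj x t) = A i t * x t - A i t * proj x t :=
      fun t => by ring
    rw [Finset.sum_congr rfl fun t _ => h1 t, Finset.sum_sub_distrib]
    have hAz : ∑ t, A i t * proj x t = b i := by
      have := congrFun hxstar i
      simpa [Matrix.mulVec, dotProduct] using this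
    rw [hAz]
  -- spectral bound
  have hspec : lammin * D ≤ ∑ i, (r i) ^ 2 := by
    have h := aux_spectral A lammin
      (fun c hc hex => hlammin.2 ⟨hc, hex⟩) (fun s => x s - proj x s) hperp
    calc lammin * D = lammin * ∑ s, ((fun s => x s - proj x s) s) ^ 2 := by rw [hDdef]
    _ ≤ ∑ i, (A.mulVec (fun s => x s - proj x s) i) ^ 2 := h
    _ = ∑ i, (r i) ^ 2 := Finset.sum_congr rfl fun i _ => by rw [hres i]
  -- combine
  have hrow : ∀ i, ∑ s, (xp i s - proj (xp i) s) ^ 2 ≤ D - (r i) ^ 2 / N i := by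
    intro i
    calc ∑ s, (xp i s - proj (xp i) s) ^ 2 ≤ ∑ s, (xp i s - proj x s) ^ 2 :=
          (hproj (xp i)).2 (proj x) hxstar
    _ = D - (r i) ^ 2 / N i := keyA i (proj x) hxstar
  calc ∑ i, (N i / F) * (∑ s, (xp i s - proj (xp i) s) ^ 2)
      ≤ ∑ i, (N i / F) * (D - (r i) ^ 2 / N i) := by
        refine Finset.sum_le_sum fun i _ => ?_
        exact mul_le_mul_of_nonneg_left (hrow i) (by positivity)
  _ = ∑ i, (N i * D / F - (r i) ^ 2 / F) := by
        refine Finset.sum_congr rfl fun i _ => ?_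
        have hNne : N i ≠ 0 := ne_of_gt (hN i)
        field_simp
  _ = (∑ i, N i) * D / F - (∑ i, (r i) ^ 2) / F := by
        rw [Finset.sum_sub_distrib, ← Finset.sum_div, ← Finset.sum_div, Finset.sum_mul]
  _ = D - (∑ i, (r i) ^ 2) / F := by
        have hsum : (∑ i, N i) = F := rfl
        rw [hsum]
        field_simp
  _ ≤ D - lammin * D / F := by
        have h2 : lammin * D / F ≤ (∑ i, (r i) ^ 2) / F := (div_le_div_iff_of_pos_right hF).mpr hspec
        linarith
  _ = (1 - lammin / F) * D := by ring
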